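/- arXiv:1707.03317 — 4 statements merged into one kernel-verified Lean document; each statement's English description precedes it below -/
import Mathlib

section
/- Let x = [0, \overline{c_1, ..., c_n}] be a periodic continued fraction as above, with rational part a (so x = a + √b). Then the fractional part {2a} depends only on c_1, ..., c_{n-1} and not on c_n; specifically, 2a + c_n = (p_{n-1} - q_{n-2})/q_{n-1}, a quantity determined by c_1, ..., c_{n-1} alone. -/
lemma qpos_aux (c q : ℕ → ℤ) (hcpos : ∀ k, 1 ≤ k → 1 ≤ c k)
    (hq0 : q 0 = 0) (hq1 : q 1 = 1)
    (hq : ∀ k, q (k + 2) = c (k + 1) * q (k + 1) + q k) :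
    ∀ k, 0 ≤ q k ∧ 1 ≤ q (k + 1) := by
  intro k
  induction k with
  | zero => simp [hq0, hq1]
  | succ k ih =>
    refine ⟨le_trans zero_le_one ih.2, ?_⟩
    rw [hq k]
    have := hcpos (k + 1) (by omega)
    nlinarith [ih.1, ih.2]

lemma main_aux (N : ℕ) (c p q : ℕ → ℤ) (hcpos : ∀ k, 1 ≤ k → 1 ≤ c k)
    (hq0 : q 0 = 0) (hq1 : q 1 = 1)
    (hq : ∀ k, q (k + 2) = c (k + 1) * q (k + 1) + q k)
    (x : ℝ) (hx0 : 0 < x) (hxirr : Irrational x)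
    (hrel : x = ((p (N + 1) : ℝ) + (p N : ℝ) * x) / ((q (N + 1) : ℝ) + (q N : ℝ) * x))
    (a b : ℚ) (s : ℝ) (hs : s ^ 2 = (b : ℝ)) (hxas : x = (a : ℝ) + s) :
    2 * a * (q N : ℚ) = (p N : ℚ) - (q (N + 1) : ℚ) := by
  subst hxas
  have hq2 := qpos_aux c q hcpos hq0 hq1 hq
  have hden : (0:ℝ) < (q (N + 1) : ℝ) + (q N : ℝ) * ((a : ℝ) + s) := by
    have h1 : (1:ℝ) ≤ (q (N+1) : ℝ) := by exact_mod_cast (hq2 N).2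
    have h2 : (0:ℝ) ≤ (q N : ℝ) := by exact_mod_cast (hq2 N).1
    nlinarith
  rw [eq_div_iff hden.ne'] at hrel
  have hsirr : Irrational s := by simpa using hxirr.sub_ratCast a
  have hAB : (((q (N+1) : ℚ) * a + (q N : ℚ) * a^2 + (q N : ℚ) * b
        - (p (N+1) : ℚ) - (p N : ℚ) * a : ℚ) : ℝ)
      + (((q (N+1) : ℚ) + 2 * (q N : ℚ) * a - (p N : ℚ) : ℚ) : ℝ) * s = 0 := by
    push_cast
    linear_combination hrel - (q N : ℝ) * hs
  set A : ℚ := (q (N+1) : ℚ) * a + (q N : ℚ) * a^2 + (q N : ℚ) * b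
        - (p (N+1) : ℚ) - (p N : ℚ) * a with hA
  set B : ℚ := (q (N+1) : ℚ) + 2 * (q N : ℚ) * a - (p N : ℚ) with hBdef
  have hB : B = 0 := by
    by_contra hB0
    have hBr : (B : ℝ) ≠ 0 := by exact_mod_cast hB0
    have hseq : s = ((-A / B : ℚ) : ℝ) := by
      push_cast
      field_simp
      linarith [hAB]
    exact (Rat.not_irrational _) (hseq ▸ hsirr)
  rw [hBdef] at hB
  linarith [hB]


/-- For `x = [0; \overline{c₁,…,cₙ}]` with rational part `a`, the fractional part of `2a`
depends only on `c₁,…,cₙ₋₁`: one has `2a + cₙ = (pₙ₋₁ - qₙ₋₂)/qₙ₋₁` (a quantity determined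
by `c₁,…,cₙ₋₁` alone), and for any second such continued fraction whose digits agree with
the first at places `1,…,n-1`, the fractional parts of `2a` coincide.
(Index `k+1` = subscript `k`.) -/
theorem stmt_7 (n : ℕ) (hn : 1 ≤ n) (c p q c' p' q' : ℕ → ℤ)
    (hc0 : c 0 = 0) (hc : ∀ k, 1 ≤ k → 1 ≤ c k)
    (hp0 : p 0 = 1) (hp1 : p 1 = 0)
    (hq0 : q 0 = 0) (hq1 : q 1 = 1)
    (hp : ∀ k, p (k + 2) = c (k + 1) * p (k + 1) + p k)
    (hq : ∀ k, q (k + 2) = c (k + 1) * q (k + 1) + q k)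
    (hc0' : c' 0 = 0) (hc' : ∀ k, 1 ≤ k → 1 ≤ c' k)
    (hp0' : p' 0 = 1) (hp1' : p' 1 = 0)
    (hq0' : q' 0 = 0) (hq1' : q' 1 = 1)
    (hp' : ∀ k, p' (k + 2) = c' (k + 1) * p' (k + 1) + p' k)
    (hq' : ∀ k, q' (k + 2) = c' (k + 1) * q' (k + 1) + q' k)
    (hagree : ∀ k, 1 ≤ k → k ≤ n - 1 → c k = c' k)
    (x : ℝ) (hx0 : 0 < x) (hx1 : x < 1) (hxirr : Irrational x)
    (hrel : x = ((p (n + 1) : ℝ) + (p n : ℝ) * x) / ((q (n + 1) : ℝ) + (q n : ℝ) * x))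
    (a b : ℚ) (hb : 0 < b) (hbns : ¬ ∃ r : ℚ, r ^ 2 = b)
    (s : ℝ) (hs : s ^ 2 = (b : ℝ)) (hxas : x = (a : ℝ) + s)
    (x' : ℝ) (hx0' : 0 < x') (hx1' : x' < 1) (hxirr' : Irrational x')
    (hrel' : x' = ((p' (n + 1) : ℝ) + (p' n : ℝ) * x') / ((q' (n + 1) : ℝ) + (q' n : ℝ) * x'))
    (a' b' : ℚ) (hb' : 0 < b') (hbns' : ¬ ∃ r : ℚ, r ^ 2 = b')
    (s' : ℝ) (hs' : s' ^ 2 = (b' : ℝ)) (hxas' : x' = (a' : ℝ) + s') :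
    2 * a + (c n : ℚ) = ((p n : ℚ) - (q (n - 1) : ℚ)) / (q n : ℚ) ∧
      Int.fract (2 * a) = Int.fract (2 * a') := by
  obtain ⟨m, rfl⟩ : ∃ m, n = m + 1 := ⟨n - 1, by omega⟩
  have h1 := main_aux (m + 1) c p q hc hq0 hq1 hq x hx0 hxirr hrel a b s hs hxas
  have h2 := main_aux (m + 1) c' p' q' hc' hq0' hq1' hq' x' hx0' hxirr' hrel' a' b' s' hs' hxas'
  have hqne : (q (m + 1) : ℚ) ≠ 0 := by
    have := (qpos_aux c q hc hq0 hq1 hq m).2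
    intro h; rw [Int.cast_eq_zero] at h; omega
  have hqne' : (q' (m + 1) : ℚ) ≠ 0 := by
    have := (qpos_aux c' q' hc' hq0' hq1' hq' m).2
    intro h; rw [Int.cast_eq_zero] at h; omega
  have hqrec : (q (m + 2) : ℚ) = (c (m + 1) : ℚ) * (q (m + 1) : ℚ) + (q m : ℚ) := by
    exact_mod_cast hq m
  have hqrec' : (q' (m + 2) : ℚ) = (c' (m + 1) : ℚ) * (q' (m + 1) : ℚ) + (q' m : ℚ) := by
    exact_mod_cast hq' m
  have goal1 : 2 * a + (c (m + 1) : ℚ)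
      = ((p (m + 1) : ℚ) - (q (m + 1 - 1) : ℚ)) / (q (m + 1) : ℚ) := by
    simp only [Nat.add_sub_cancel]
    rw [eq_div_iff hqne]
    linear_combination h1 - hqrec
  refine ⟨goal1, ?_⟩
  have goal1' : 2 * a' + (c' (m + 1) : ℚ)
      = ((p' (m + 1) : ℚ) - (q' m : ℚ)) / (q' (m + 1) : ℚ) := by
    rw [eq_div_iff hqne']
    linear_combination h2 - hqrec'
  -- digit agreement gives equality of convergents
  have key : ∀ k, k ≤ m + 1 → p k = p' k ∧ q k = q' k := by
    intro k
    induction k using Nat.strong_induction_on with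
    | _ k ih =>
      cases k with
      | zero => intro _; exact ⟨by rw [hp0, hp0'], by rw [hq0, hq0']⟩
      | succ k =>
        cases k with
        | zero => intro _; exact ⟨by rw [hp1, hp1'], by rw [hq1, hq1']⟩
        | succ k =>
          intro hk
          have hce : c (k + 1) = c' (k + 1) := hagree (k + 1) (by omega) (by omega)
          have ha := ih (k + 1) (by omega) (by omega)
          have hb2 := ih k (by omega) (by omega)
          exact ⟨by rw [hp k, hp' k, hce, ha.1, hb2.1],
                 by rw [hq k, hq' k, hce, ha.2, hb2.2]⟩
  have hpe := (key (m + 1) le_rfl).1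
  have hqe := (key (m + 1) le_rfl).2
  have hqme := (key m (by omega)).2
  have ha2 : 2 * a = ((p (m + 1) : ℚ) - (q m : ℚ)) / (q (m + 1) : ℚ) - (c (m + 1) : ℚ) := by
    have := goal1
    simp only [Nat.add_sub_cancel] at this
    linarith
  have ha2' : 2 * a' = ((p (m + 1) : ℚ) - (q m : ℚ)) / (q (m + 1) : ℚ) - (c' (m + 1) : ℚ) := by
    rw [hpe, hqe, hqme]; linarith [goal1']
  rw [ha2, ha2', Int.fract_sub_intCast, Int.fract_sub_intCast]
end

section
/- Let n ≥ 2 and let p_k, q_k be convergents of a continued fraction with positive integer digits c_1, ..., c_n and c_0 = 0. Then p_{n-1} = q_{n-2} if and only if p_{n-1}^2 ≡ (-1)^n (mod q_{n-1}). -/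
/-- For `n ≥ 2` and convergents of a continued fraction with `c₀ = 0` and positive
integer digits (index `k+1` = subscript `k`): `pₙ₋₁ = qₙ₋₂` if and only if
`pₙ₋₁² ≡ (-1)ⁿ (mod qₙ₋₁)`. -/
theorem stmt_9 (n : ℕ) (hn : 2 ≤ n) (c p q : ℕ → ℤ)
    (hc0 : c 0 = 0) (hc : ∀ k, 1 ≤ k → 1 ≤ c k)
    (hp0 : p 0 = 1) (hp1 : p 1 = 0)
    (hq0 : q 0 = 0) (hq1 : q 1 = 1)
    (hp : ∀ k, p (k + 2) = c (k + 1) * p (k + 1) + p k)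
    (hq : ∀ k, q (k + 2) = c (k + 1) * q (k + 1) + q k) :
    p n = q (n - 1) ↔ (p n) ^ 2 ≡ (-1) ^ n [ZMOD q n] := by
  -- determinant identity
  have key : ∀ k, p (k+1) * q k - p k * q (k+1) = (-1)^(k+1) := by
    intro k
    induction k with
    | zero => simp [hp0, hp1, hq0, hq1]
    | succ m ih =>
      rw [hp m, hq m]
      have : (-1:ℤ)^(m+1+1) = -(-1)^(m+1) := by ring
      rw [this, ← ih]; ring
  -- q nonneg / positive
  have hqpos : ∀ k, 0 ≤ q k ∧ 1 ≤ q (k+1) := by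
    intro k
    induction k with
    | zero => simp [hq0, hq1]
    | succ m ih =>
      refine ⟨by linarith [ih.2], ?_⟩
      rw [hq m]
      have hcm := hc (m+1) (by omega)
      nlinarith [ih.1, ih.2]
  -- q monotone
  have hqmono : ∀ k, q (k+1) ≤ q (k+2) := by
    intro k
    rw [hq k]
    have hcm := hc (k+1) (by omega)
    nlinarith [(hqpos k).1, (hqpos k).2]
  -- p positivity
  have hppos : ∀ k, 0 ≤ p (k+1) ∧ 1 ≤ p (k+2) := by
    intro k
    induction k with
    | zero => constructor <;> simp [hp 0, hp1, hp0, hq1]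
    | succ m ih =>
      refine ⟨by linarith [ih.2], ?_⟩
      rw [hp (m+1)]
      have hcm := hc (m+2) (by omega)
      nlinarith [ih.1, ih.2]
  -- p ≤ q from index 2 on
  have hpq : ∀ k, p (k+2) ≤ q (k+2) ∧ p (k+3) ≤ q (k+3) := by
    intro k
    induction k with
    | zero =>
      have hc1 := hc 1 (by omega)
      have hc2 := hc 2 (by omega)
      constructor
      · rw [hp 0, hq 0]; nlinarith
      · rw [hp 1, hq 1, hp 0, hq 0]
        norm_num [hp1, hp0, hq0, hq1]
        nlinarith
    | succ m ih =>
      refine ⟨ih.2, ?_⟩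
      rw [hp (m+2), hq (m+2)]
      have hcm := hc (m+3) (by omega)
      have := (hppos (m+2)).2
      nlinarith [ih.1, ih.2, (hqpos (m+2)).2]
  obtain ⟨m, rfl⟩ : ∃ m, n = m + 2 := ⟨n - 2, by omega⟩
  have hkey : p (m+2) * q (m+1) - p (m+1) * q (m+2) = (-1)^(m+2) := key (m+1)
  have hsq : ((-1:ℤ)^(m+2)) * ((-1:ℤ)^(m+2)) = 1 := by rw [← mul_pow]; norm_num
  have hcop : IsCoprime (p (m+2)) (q (m+2)) :=
    ⟨(-1)^(m+2) * q (m+1), (-1)^(m+2) * (-(p (m+1))), by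
      linear_combination ((-1:ℤ)^(m+2)) * hkey + hsq⟩
  have hqn1 : 1 ≤ q (m+1) := (hqpos m).2
  have hqn : 1 ≤ q (m+2) := (hqpos (m+1)).2
  have hqm : q (m+1) ≤ q (m+2) := hqmono m
  have hpn1 : 1 ≤ p (m+2) := (hppos m).2
  have hpn : p (m+2) ≤ q (m+2) := (hpq m).1
  have hmod : p (m+2) * q (m+1) ≡ (-1)^(m+2) [ZMOD q (m+2)] := by
    have : q (m+2) ∣ p (m+2) * q (m+1) - (-1)^(m+2) := ⟨p (m+1), by linear_combination hkey⟩
    exact Int.ModEq.symm (Int.modEq_of_dvd (by simpa using this))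
  simp only [show m + 2 - 1 = m + 1 from rfl]
  constructor
  · intro h
    calc p (m+2) ^ 2 = p (m+2) * q (m+1) := by rw [h]; ring
      _ ≡ (-1)^(m+2) [ZMOD q (m+2)] := hmod
  · intro h
    have h2 : p (m+2) * q (m+1) ≡ p (m+2) ^ 2 [ZMOD q (m+2)] :=
      hmod.trans h.symm
    have hdvd : q (m+2) ∣ p (m+2) * (p (m+2) - q (m+1)) := by
      have := h2.dvd
      have e : p (m+2) ^ 2 - p (m+2) * q (m+1) = p (m+2) * (p (m+2) - q (m+1)) := by ring
      rwa [e] at this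
    have hdvd2 : q (m+2) ∣ p (m+2) - q (m+1) :=
      (hcop.symm.dvd_of_dvd_mul_left hdvd)
    have := Int.eq_zero_of_abs_lt_dvd hdvd2 (by
      rw [abs_lt]; constructor <;> linarith)
    linarith
end

section
/- Let p_k, q_k be the convergents of [0, c_1, ..., c_n] with positive integer digits, n ≥ 1. Then p_{n-1}^2 ≡ (-1)^n (mod q_{n-1}) if and only if the sequence c_1, ..., c_{n-1} is symmetric, i.e., c_k = c_{n-k} for all 1 ≤ k ≤ n-1. -/
open Matrix

private def mC (a : ℤ) : Matrix (Fin 2) (Fin 2) ℤ := !![a, 1; 1, 0]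

private def pL (l : List ℤ) : Matrix (Fin 2) (Fin 2) ℤ := (l.map mC).prod

private lemma pL_nil : pL [] = 1 := rfl

private lemma pL_cons (a : ℤ) (l : List ℤ) : pL (a :: l) = mC a * pL l := by
  simp [pL]

private lemma pL_append (l l' : List ℤ) : pL (l ++ l') = pL l * pL l' := by
  simp [pL]

private lemma eM00 (a b c d : ℤ) : (!![a, b; c, d]) 0 0 = a := rfl
private lemma eM01 (a b c d : ℤ) : (!![a, b; c, d]) 0 1 = b := rfl
private lemma eM10 (a b c d : ℤ) : (!![a, b; c, d]) 1 0 = c := rfl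
private lemma eM11 (a b c d : ℤ) : (!![a, b; c, d]) 1 1 = d := rfl

private lemma mC_mul_left (a : ℤ) (A : Matrix (Fin 2) (Fin 2) ℤ) :
    mC a * A = !![a * A 0 0 + A 1 0, a * A 0 1 + A 1 1; A 0 0, A 0 1] := by
  ext i j
  fin_cases i <;> fin_cases j <;>
    simp [mC, Matrix.mul_apply, Fin.sum_univ_two]

private lemma mC_mul_right (b : ℤ) (A : Matrix (Fin 2) (Fin 2) ℤ) :
    A * mC b = !![b * A 0 0 + A 0 1, A 0 0; b * A 1 0 + A 1 1, A 1 0] := by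
  ext i j
  fin_cases i <;> fin_cases j <;>
    simp [mC, Matrix.mul_apply, Fin.sum_univ_two, mul_comm]

/-- Invariants of continuant matrices of nonempty lists with entries `≥ 1`. -/
private lemma pL_inv : ∀ (l : List ℤ), l ≠ [] → (∀ x ∈ l, 1 ≤ x) →
    1 ≤ pL l 0 0 ∧ 1 ≤ pL l 0 1 ∧ 1 ≤ pL l 1 0 ∧ 0 ≤ pL l 1 1 ∧
    pL l 1 1 ≤ pL l 0 1 ∧ pL l 1 1 ≤ pL l 1 0 ∧ pL l 0 1 ≤ pL l 0 0 ∧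
    pL l 1 0 ≤ pL l 0 0 ∧ (l ≠ [1] → pL l 0 1 < pL l 0 0 ∧ pL l 1 0 < pL l 0 0) := by
  intro l
  induction l with
  | nil => intro h; exact absurd rfl h
  | cons a t ih =>
    intro _ hl
    have ha : 1 ≤ a := hl a (by simp)
    cases t with
    | nil =>
      have h1 : pL [a] = !![a, 1; 1, 0] := by
        rw [pL_cons, pL_nil, mul_one]; rfl
      simp only [h1]
      refine ⟨by simpa using ha, by norm_num, by norm_num, by norm_num,
        by norm_num, by norm_num, by simpa using ha, by simpa using ha, ?_⟩
      intro hne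
      have ha1 : a ≠ 1 := by intro h; exact hne (by rw [h])
      have e00 : (!![a, 1; 1, 0] : Matrix (Fin 2) (Fin 2) ℤ) 0 0 = a := rfl
      have e01 : (!![a, 1; 1, 0] : Matrix (Fin 2) (Fin 2) ℤ) 0 1 = 1 := rfl
      have e10 : (!![a, 1; 1, 0] : Matrix (Fin 2) (Fin 2) ℤ) 1 0 = 1 := rfl
      exact ⟨by rw [e01, e00]; omega, by rw [e10, e00]; omega⟩
    | cons b t' =>
      have hne' : (b :: t') ≠ ([] : List ℤ) := by simp
      have hl' : ∀ x ∈ (b :: t'), 1 ≤ x := fun x hx => hl x (by simp [hx])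
      obtain ⟨i1, i2, i3, i4, i5, i6, i7, i8, i9⟩ := ih hne' hl'
      set E := pL (b :: t') with hE
      have hstep : pL (a :: b :: t') =
          !![a * E 0 0 + E 1 0, a * E 0 1 + E 1 1; E 0 0, E 0 1] := by
        rw [pL_cons, mC_mul_left]
      simp only [hstep, eM00, eM01, eM10, eM11]
      refine ⟨by nlinarith, by nlinarith, i1, by linarith, by nlinarith, i7,
        by nlinarith, by nlinarith, ?_⟩
      · intro _
        constructor
        · by_cases h1 : (b :: t') = [1]
          · have : E = !![1, 1; 1, 0] := by
              rw [hE, h1, pL_cons, pL_nil, mul_one]; rfl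
            simp [this]
          · obtain ⟨j1, j2⟩ := i9 h1
            nlinarith
        · nlinarith

private lemma palindrome_decomp (a b : ℤ) (t : List ℤ) :
    (a :: (t ++ [b])).reverse = a :: (t ++ [b]) ↔ a = b ∧ t.reverse = t := by
  constructor
  · intro h
    have h' : b :: (t.reverse ++ [a]) = a :: (t ++ [b]) := by
      simpa [List.reverse_cons, List.reverse_append] using h
    obtain ⟨hba, htail⟩ := List.cons.injEq .. ▸ h'
    refine ⟨hba.symm, ?_⟩
    subst hba
    exact List.append_cancel_right htail
  · rintro ⟨rfl, hpal⟩
    simp [List.reverse_cons, List.reverse_append, hpal]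

/-- Key lemma: the continuant matrix of a positive word is symmetric iff the word
is a palindrome. -/
private lemma pL_symm_iff : ∀ (m : ℕ) (w : List ℤ), w.length ≤ m → (∀ x ∈ w, 1 ≤ x) →
    (pL w 0 1 = pL w 1 0 ↔ w.reverse = w) := by
  intro m
  induction m with
  | zero =>
    intro w hw _
    have : w = [] := List.length_eq_zero_iff.mp (Nat.le_zero.mp hw)
    subst this
    simp [pL_nil]
  | succ m ih =>
    intro w hlen hw
    match w with
    | [] => simp [pL_nil]
    | [a] =>
      have h1 : pL [a] = !![a, 1; 1, 0] := by rw [pL_cons, pL_nil, mul_one]; rfl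
      simp [h1]
    | a :: x :: s' =>
      have hs : (x :: s') ≠ ([] : List ℤ) := by simp
      obtain ⟨t, b, hsd⟩ : ∃ t b, (x :: s') = t ++ [b] :=
        ⟨(x :: s').dropLast, (x :: s').getLast hs, (List.dropLast_append_getLast hs).symm⟩
      rw [hsd]
      have ha : (1 : ℤ) ≤ a := hw a (by simp)
      have hb : (1 : ℤ) ≤ b := hw b (by rw [hsd]; simp)
      have hwt : ∀ y ∈ t, (1 : ℤ) ≤ y := by
        intro y hy
        exact hw y (by rw [hsd]; simp [hy])
      have hlt : t.length ≤ m := by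
        have := congrArg List.length hsd
        simp at this
        simp at hlen
        omega
      have ihw := ih t hlt hwt
      set E := pL t with hEdef
      have hb1 : pL [b] = mC b := by rw [pL_cons, pL_nil, mul_one]
      have h01 : pL (a :: (t ++ [b])) 0 1 = a * E 0 0 + E 1 0 := by
        rw [pL_cons, pL_append, hb1, ← mul_assoc, mC_mul_left, mC_mul_right]
        simp
        rfl
      have h10 : pL (a :: (t ++ [b])) 1 0 = b * E 0 0 + E 0 1 := by
        rw [pL_cons, pL_append, hb1, ← mul_assoc, mC_mul_left, mC_mul_right]
        simp
        rfl
      rw [h01, h10, palindrome_decomp]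
      rcases eq_or_ne t [] with rfl | htne
      · have hO : E = 1 := pL_nil
        simp only [hO]
        simp only [Matrix.one_apply, if_pos rfl]
        norm_num
      · rcases eq_or_ne t [1] with rfl | ht1
        · have hE1 : E = !![1, 1; 1, 0] := by rw [hEdef, pL_cons, pL_nil, mul_one]; rfl
          simp only [hE1, eM00, eM01, eM10]
          norm_num
        · obtain ⟨i1, i2, i3, _, _, _, _, _, i9⟩ := pL_inv t htne hwt
          obtain ⟨j1, j2⟩ := i9 ht1
          rw [← ihw]
          constructor
          · intro h
            have hab : a = b := by
              rcases lt_trichotomy a b with hlt' | heq | hgt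
              · exfalso
                have : (a + 1) * E 0 0 ≤ b * E 0 0 := by
                  apply mul_le_mul_of_nonneg_right _ (by linarith)
                  omega
                nlinarith
              · exact heq
              · exfalso
                have : (b + 1) * E 0 0 ≤ a * E 0 0 := by
                  apply mul_le_mul_of_nonneg_right _ (by linarith)
                  omega
                nlinarith
            refine ⟨hab, ?_⟩
            subst hab
            linarith
          · rintro ⟨rfl, hfg⟩
            rw [hfg]

/-- (Perron) For convergents of `[0; c₁,…,cₙ]` with positive integer digits, `n ≥ 1`
(index `k+1` = subscript `k`): `pₙ₋₁² ≡ (-1)ⁿ (mod qₙ₋₁)` if and only if the sequence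
`c₁,…,cₙ₋₁` is symmetric, i.e. `cₖ = c_{n-k}` for `1 ≤ k ≤ n-1`. -/
theorem stmt_10 (n : ℕ) (hn : 1 ≤ n) (c p q : ℕ → ℤ)
    (hc0 : c 0 = 0) (hc : ∀ k, 1 ≤ k → 1 ≤ c k)
    (hp0 : p 0 = 1) (hp1 : p 1 = 0)
    (hq0 : q 0 = 0) (hq1 : q 1 = 1)
    (hp : ∀ k, p (k + 2) = c (k + 1) * p (k + 1) + p k)
    (hq : ∀ k, q (k + 2) = c (k + 1) * q (k + 1) + q k) :
    (p n) ^ 2 ≡ (-1) ^ n [ZMOD q n] ↔ ∀ k, 1 ≤ k → k ≤ n - 1 → c k = c (n - k) := by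
  -- determinant identity
  have hdet : ∀ k, p (k + 1) * q k - p k * q (k + 1) = (-1) ^ (k + 1) := by
    intro k
    induction k with
    | zero => simp [hp0, hp1, hq0, hq1]
    | succ k ih =>
      rw [hp k, hq k]
      have : ((-1 : ℤ)) ^ (k + 1 + 1) = -((-1) ^ (k + 1)) := by ring
      rw [this, ← ih]
      ring
  -- continuant matrix identity
  have hPw : ∀ k, pL ((List.range k).map fun i => c (i + 1)) =
      !![q (k + 1), q k; p (k + 1), p k] := by
    intro k
    induction k with
    | zero =>
      rw [List.range_zero, List.map_nil, pL_nil, hp0, hp1, hq0, hq1]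
      exact Matrix.one_fin_two
    | succ k ih =>
      rw [List.range_succ, List.map_append, List.map_cons, List.map_nil, pL_append, ih]
      have h1 : pL [c (k + 1)] = mC (c (k + 1)) := by rw [pL_cons, pL_nil, mul_one]
      rw [h1, mC_mul_right, hp k, hq k]
      simp [mC]
  rcases n with _ | _ | m
  · omega
  · -- n = 1 : both sides trivially true
    constructor
    · intro _ k hk1 hk0
      omega
    · intro _
      rw [hq1]
      exact Int.modEq_one
  · -- n = m + 2
    set w : List ℤ := (List.range (m + 1)).map fun i => c (i + 1) with hwdef
    have hwne : w ≠ [] := by simp [hwdef]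
    have hwpos : ∀ x ∈ w, (1 : ℤ) ≤ x := by
      intro x hx
      simp only [hwdef, List.mem_map, List.mem_range] at hx
      obtain ⟨i, _, rfl⟩ := hx
      exact hc (i + 1) (by omega)
    have hPmat := hPw (m + 1)
    have hq01 : pL w 0 1 = q (m + 1) := by rw [← hwdef] at hPmat; rw [hPmat]; simp
    have hp10 : pL w 1 0 = p (m + 2) := by rw [← hwdef] at hPmat; rw [hPmat]; simp
    have hq00 : pL w 0 0 = q (m + 2) := by rw [← hwdef] at hPmat; rw [hPmat]; simp
    obtain ⟨i1, i2, i3, _, _, _, i7, i8, _⟩ := pL_inv w hwne hwpos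
    rw [hq00] at i1 i7 i8
    rw [hq01] at i2 i7
    rw [hp10] at i3 i8
    have hD := hdet (m + 1)
    -- step 1 : congruence ↔ q (m+2) ∣ q (m+1) - p (m+2)
    have step1 : ((p (m + 2)) ^ 2 ≡ (-1) ^ (m + 2) [ZMOD q (m + 2)]) ↔
        q (m + 1) = p (m + 2) := by
      rw [Int.modEq_iff_dvd]
      have key : (-1 : ℤ) ^ (m + 2) - p (m + 2) ^ 2 =
          p (m + 2) * (q (m + 1) - p (m + 2)) + (-(p (m + 1))) * q (m + 2) := by
        have : ((-1 : ℤ)) ^ (m + 2) = (-1) ^ (m + 1 + 1) := by norm_num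
        rw [this, ← hD]
        ring
      rw [key]
      rw [dvd_add_left (Dvd.intro_left _ rfl)]
      constructor
      · intro hdvd
        have hcop : IsCoprime (q (m + 2)) (p (m + 2)) := by
          refine ⟨(-1) ^ (m + 2) * (-(p (m + 1))), (-1) ^ (m + 2) * q (m + 1), ?_⟩
          have hsq : ((-1 : ℤ) ^ (m + 2)) * ((-1 : ℤ) ^ (m + 2)) = 1 := by
            rw [← pow_add]
            exact Even.neg_one_pow ⟨m + 2, by ring⟩
          have h2 : ((-1 : ℤ)) ^ (m + 2) = (-1) ^ (m + 1 + 1) := by norm_num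
          calc (-1 : ℤ) ^ (m + 2) * (-(p (m + 1))) * q (m + 2) +
              (-1) ^ (m + 2) * q (m + 1) * p (m + 2)
              = (-1 : ℤ) ^ (m + 2) * (p (m + 2) * q (m + 1) - p (m + 1) * q (m + 2)) := by
                ring
            _ = 1 := by rw [h2, hD]; exact hsq
        have hdvd2 : q (m + 2) ∣ q (m + 1) - p (m + 2) :=
          hcop.dvd_of_dvd_mul_left hdvd
        have habs : |q (m + 1) - p (m + 2)| < q (m + 2) := by
          rw [abs_lt]
          constructor <;> linarith
        have := Int.eq_zero_of_abs_lt_dvd hdvd2 habs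
        linarith
      · intro heq
        rw [heq]
        simp
    rw [step1, ← hp10, ← hq01,
      pL_symm_iff (m + 1) w (by simp [hwdef]) hwpos]
    -- step 2 : palindrome ↔ index condition
    constructor
    · intro hrev k hk1 hk2
      have hlw : w.length = m + 1 := by simp [hwdef]
      have hk : k - 1 < w.length := by omega
      have this := List.getElem_of_eq hrev.symm hk
      rw [List.getElem_reverse] at this
      simp only [hlw] at this
      have e1 : w[m + 1 - 1 - (k - 1)]'(by omega) = c (m + 2 - k) := by
        simp only [hwdef, List.getElem_map, List.getElem_range]
        congr 1
        omega
      have e2 : w[k - 1]'(by omega) = c k := by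
        simp only [hwdef, List.getElem_map, List.getElem_range]
        congr 1
        omega
      rw [e1, e2] at this
      have hidx : m + 1 + 1 - k = m + 2 - k := by omega
      rw [hidx]
      exact this
    · intro hsym
      apply List.ext_getElem (by simp)
      intro i h1 h2
      have hlw : w.length = m + 1 := by simp [hwdef]
      rw [List.getElem_reverse]
      have hi : i < m + 1 := by simpa [hlw] using h2
      have e1 : w[w.length - 1 - i]'(by omega) = c (m + 1 - i) := by
        simp only [hwdef, List.getElem_map, List.getElem_range, hlw]
        congr 1
        simp [hwdef]
        omega
      have e2 : w[i]'(by omega) = c (i + 1) := by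
        simp only [hwdef, List.getElem_map, List.getElem_range]
      rw [e1, e2]
      have := hsym (i + 1) (by omega) (by omega)
      rw [this]
      congr 1
      omega
end

section
/- Let x = [0, \overline{c_1, ..., c_n}] with rational part a. The following are equivalent: (a) 2a ∈ ℤ; (b) 2a = -c_n; (c) the sequence c_1, ..., c_{n-1} is symmetric (c_k = c_{n-k} for 1 ≤ k ≤ n-1). -/
namespace Stmt11

/-- `mf l` is the matrix `[[q, q̄],[p, p̄]]` of the word `l` as a tuple `(q, q̄, p, p̄)`. -/
def mf : List ℤ → ℤ × ℤ × ℤ × ℤ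
  | [] => (1, 0, 0, 1)
  | a :: t => (a * (mf t).1 + (mf t).2.2.1, a * (mf t).2.1 + (mf t).2.2.2, (mf t).1, (mf t).2.1)

lemma mf_append (l : List ℤ) (a : ℤ) :
    mf (l ++ [a]) = (a * (mf l).1 + (mf l).2.1, (mf l).1,
      a * (mf l).2.2.1 + (mf l).2.2.2, (mf l).2.2.1) := by
  induction l with
  | nil => simp [mf]
  | cons b t ih =>
    rw [List.cons_append]
    show (_, _, _, _) = _
    simp only [mf, ih, Prod.mk.injEq]
    exact ⟨by ring, trivial⟩

lemma mf_reverse (l : List ℤ) :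
    mf l.reverse = ((mf l).1, (mf l).2.2.1, (mf l).2.1, (mf l).2.2.2) := by
  induction l with
  | nil => simp [mf]
  | cons a t ih =>
    simp [mf, mf_append, ih]

lemma mf_pos (l : List ℤ) (h : ∀ x ∈ l, 1 ≤ x) :
    1 ≤ (mf l).1 ∧ 0 ≤ (mf l).2.2.1 ∧ (mf l).2.2.1 ≤ (mf l).1 ∧
    0 ≤ (mf l).2.1 ∧ (mf l).2.1 ≤ (mf l).1 ∧
    (l ≠ [] → 1 ≤ (mf l).2.2.1 ∧ 1 ≤ (mf l).2.1 ∧ 0 ≤ (mf l).2.2.2 ∧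
      (mf l).2.2.2 ≤ (mf l).2.2.1) := by
  induction l with
  | nil => simp [mf]
  | cons a t ih =>
    have ha : 1 ≤ a := h a (by simp)
    have ht : ∀ x ∈ t, 1 ≤ x := fun x hx => h x (by simp [hx])
    obtain ⟨h1, h2, h3, h4, h5, h6⟩ := ih ht
    rcases eq_or_ne t [] with rfl | hne
    · simp [mf]
      omega
    · obtain ⟨hp1, hq1, hpb0, hpbp⟩ := h6 hne
      simp only [mf]
      refine ⟨by nlinarith, by nlinarith, by nlinarith, by nlinarith, by nlinarith,
        fun _ => ⟨by nlinarith, by nlinarith, by nlinarith, by nlinarith⟩⟩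

lemma mf_inj : ∀ l l' : List ℤ, (∀ x ∈ l, 1 ≤ x) → (∀ x ∈ l', 1 ≤ x) →
    l.length = l'.length → mf l = mf l' → l = l' := by
  intro l
  induction l with
  | nil =>
    intro l' _ _ hlen _
    cases l' with
    | nil => rfl
    | cons a t => simp at hlen
  | cons a t ih =>
    intro l' hmem hmem' hlen heq
    cases l' with
    | nil => simp at hlen
    | cons a' t' =>
      have ht : ∀ x ∈ t, 1 ≤ x := fun x hx => hmem x (by simp [hx])
      have ht' : ∀ x ∈ t', 1 ≤ x := fun x hx => hmem' x (by simp [hx])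
      have hlen' : t.length = t'.length := by simpa using hlen
      simp only [mf, Prod.mk.injEq] at heq
      obtain ⟨e1, e2, e3, e4⟩ := heq
      -- e3 : (mf t).1 = (mf t').1, e4 : (mf t).2.1 = (mf t').2.1
      obtain ⟨q1, p0, ppq, _, _, h6⟩ := mf_pos t ht
      obtain ⟨q1', p0', ppq', _, _, h6'⟩ := mf_pos t' ht'
      have haa : a = a' := by
        rcases eq_or_ne t [] with rfl | hne
        · have : t' = [] := by
            cases t' with
            | nil => rfl
            | cons b s => simp at hlen'
          subst this
          simp [mf] at e1 e3 e4 ⊢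
          omega
        · have hne' : t' ≠ [] := by
            intro hh
            apply hne
            subst hh
            simpa using hlen'
          obtain ⟨hpt, _, _, _⟩ := h6 hne
          obtain ⟨hpt', _, _, _⟩ := h6' hne'
          -- e1 : a * (mf t).1 + (mf t).2.2.1 = a' * (mf t').1 + (mf t').2.2.1
          rw [← e3] at e1
          rcases lt_trichotomy a a' with hlt | heq | hgt
          · exfalso; nlinarith [ppq, ppq', hpt, hpt', e1, q1]
          · exact heq
          · exfalso; nlinarith [ppq, ppq', hpt, hpt', e1, q1]
      subst haa
      rw [← e3] at e1
      rw [← e4] at e2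
      have ep : (mf t).2.2.1 = (mf t').2.2.1 := by linarith
      have epb : (mf t).2.2.2 = (mf t').2.2.2 := by linarith
      have : mf t = mf t' := by
        rw [Prod.ext_iff, Prod.ext_iff, Prod.ext_iff]
        exact ⟨e3, e4, ep, epb⟩
      rw [ih t' ht ht' hlen' this]

def W (c : ℕ → ℤ) : ℕ → List ℤ
  | 0 => []
  | m + 1 => W c m ++ [c (m + 1)]

lemma W_eq (c : ℕ → ℤ) (m : ℕ) : W c m = (List.range m).map fun i => c (i + 1) := by
  induction m with
  | zero => rfl
  | succ k ih => rw [W, List.range_succ]; simp [ih]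

lemma W_length (c : ℕ → ℤ) (m : ℕ) : (W c m).length = m := by
  rw [W_eq]; simp

lemma W_palindrome_iff (c : ℕ → ℤ) (m : ℕ) :
    (W c m).reverse = W c m ↔ ∀ k, 1 ≤ k → k ≤ m → c k = c (m + 1 - k) := by
  rw [W_eq]
  constructor
  · intro h k hk1 hkm
    have hi : k - 1 < ((List.range m).map fun i => c (i + 1)).reverse.length := by
      simp; omega
    have e := List.getElem_of_eq h hi
    rw [List.getElem_reverse] at e
    simp only [List.getElem_map, List.getElem_range, List.length_map, List.length_range] at e
    have e1 : m - 1 - (k - 1) + 1 = m + 1 - k := by omega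
    have e2 : k - 1 + 1 = k := by omega
    rw [e1, e2] at e
    exact e.symm
  · intro h
    apply List.ext_getElem (by simp)
    intro i h1 h2
    rw [List.getElem_reverse]
    simp only [List.getElem_map, List.getElem_range, List.length_map, List.length_range] at h2 ⊢
    have h3 : i < m := h2
    have h4 : m - 1 - i + 1 = m - i := by omega
    have h5 := h (i + 1) (by omega) (by omega)
    have h6 : m + 1 - (i + 1) = m - i := by omega
    rw [h4, h5, h6]

end Stmt11

/-- For `x = [0; \overline{c₁,…,cₙ}]` with rational part `a` (convergents with index
`k+1` = subscript `k`), the following are equivalent: (a) `2a ∈ ℤ`; (b) `2a = -cₙ`;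
(c) the sequence `c₁,…,cₙ₋₁` is symmetric. -/
theorem stmt_11 (n : ℕ) (hn : 1 ≤ n) (c p q : ℕ → ℤ)
    (hc0 : c 0 = 0) (hc : ∀ k, 1 ≤ k → 1 ≤ c k)
    (hp0 : p 0 = 1) (hp1 : p 1 = 0)
    (hq0 : q 0 = 0) (hq1 : q 1 = 1)
    (hp : ∀ k, p (k + 2) = c (k + 1) * p (k + 1) + p k)
    (hq : ∀ k, q (k + 2) = c (k + 1) * q (k + 1) + q k)
    (x : ℝ) (hx0 : 0 < x) (hx1 : x < 1) (hxirr : Irrational x)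
    (hrel : x = ((p (n + 1) : ℝ) + (p n : ℝ) * x) / ((q (n + 1) : ℝ) + (q n : ℝ) * x))
    (a b : ℚ) (hb : 0 < b) (hbns : ¬ ∃ r : ℚ, r ^ 2 = b)
    (s : ℝ) (hs : s ^ 2 = (b : ℝ)) (hxas : x = (a : ℝ) + s) :
    ((∃ m : ℤ, 2 * a = (m : ℚ)) ↔ 2 * a = -(c n : ℚ)) ∧
      ((∃ m : ℤ, 2 * a = (m : ℚ)) ↔ ∀ k, 1 ≤ k → k ≤ n - 1 → c k = c (n - k)) := by
  obtain ⟨m, rfl⟩ : ∃ m, n = m + 1 := ⟨n - 1, by omega⟩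
  -- bridge between the recurrences and `mf` of the word `[c 1, …, c m]`
  have hW : ∀ j, Stmt11.mf (Stmt11.W c j) = (q (j + 1), q j, p (j + 1), p j) := by
    intro j
    induction j with
    | zero => simp [Stmt11.W, Stmt11.mf, hp0, hp1, hq0, hq1]
    | succ i ih =>
      show Stmt11.mf (Stmt11.W c i ++ [c (i + 1)]) = _
      rw [Stmt11.mf_append, ih, hq i, hp i]
  have hmem : ∀ j, ∀ y ∈ Stmt11.W c j, 1 ≤ y := by
    intro j y hy
    rw [Stmt11.W_eq] at hy
    simp only [List.mem_map, List.mem_range] at hy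
    obtain ⟨i, _, rfl⟩ := hy
    exact hc _ (by omega)
  obtain ⟨hQ1, hP0, hPQ, hQb0, hQbQ, hne⟩ := Stmt11.mf_pos (Stmt11.W c m) (hmem m)
  rw [hW m] at hQ1 hP0 hPQ hQb0 hQbQ hne
  simp only at hQ1 hP0 hPQ hQb0 hQbQ hne
  -- hQ1 : 1 ≤ q (m+1), hP0 : 0 ≤ p (m+1), hPQ : p (m+1) ≤ q (m+1),
  -- hQb0 : 0 ≤ q m, hQbQ : q m ≤ q (m+1)
  have hcm1 : 1 ≤ c (m + 1) := hc _ (by omega)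
  -- s is irrational
  have hsirr : Irrational s := by
    rintro ⟨r, hr⟩
    exact hxirr ⟨a + r, by rw [hxas, ← hr]; push_cast; ring⟩
  -- the quadratic equation for x
  have hq2 : (1 : ℤ) ≤ q (m + 2) := by
    rw [hq m]; nlinarith
  have hden : (0 : ℝ) < (q (m + 1 + 1) : ℝ) + (q (m + 1) : ℝ) * x := by
    have h1 : (1 : ℝ) ≤ (q (m + 2) : ℝ) := by exact_mod_cast hq2
    have h2 : (1 : ℝ) ≤ (q (m + 1) : ℝ) := by exact_mod_cast hQ1
    nlinarith
  have hquad : (q (m + 1) : ℝ) * x ^ 2 + ((q (m + 2) : ℝ) - (p (m + 1) : ℝ)) * x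
      - (p (m + 2) : ℝ) = 0 := by
    have h2 := hrel
    rw [eq_div_iff (ne_of_gt hden)] at h2
    push_cast at h2 ⊢
    nlinarith [h2]
  -- rational coefficient of s vanishes
  have hB : 2 * (q (m + 1) : ℚ) * a + (q (m + 2) : ℚ) - (p (m + 1) : ℚ) = 0 := by
    by_contra hBne
    set B : ℚ := 2 * (q (m + 1) : ℚ) * a + (q (m + 2) : ℚ) - (p (m + 1) : ℚ) with hBdef
    set A : ℚ := (q (m + 1) : ℚ) * (a ^ 2 + b) + ((q (m + 2) : ℚ) - (p (m + 1) : ℚ)) * a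
      - (p (m + 2) : ℚ) with hAdef
    have hlin : (A : ℝ) + (B : ℝ) * s = 0 := by
      rw [hxas] at hquad
      rw [hAdef, hBdef]
      push_cast
      linear_combination hquad - (q (m + 1) : ℝ) * hs
    have hsrat : s = ((-A / B : ℚ) : ℝ) := by
      have hBne' : (B : ℝ) ≠ 0 := by exact_mod_cast hBne
      rw [Rat.cast_div, Rat.cast_neg, eq_div_iff hBne']
      linear_combination hlin
    exact hsirr ⟨-A / B, hsrat.symm⟩
  -- key divisibility characterization
  have key1 : (∃ z : ℤ, 2 * a = (z : ℚ)) ↔ p (m + 1) = q m := by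
    constructor
    · rintro ⟨z, hz⟩
      have hzq : (z : ℚ) * (q (m + 1) : ℚ) = (p (m + 1) : ℚ) - (q (m + 2) : ℚ) := by
        rw [← hz]; linarith [hB]
      have hzz : z * q (m + 1) = p (m + 1) - q (m + 2) := by exact_mod_cast hzq
      rw [hq m] at hzz
      have hw : (z + c (m + 1)) * q (m + 1) = p (m + 1) - q m := by linear_combination hzz
      set w : ℤ := z + c (m + 1) with hwdef
      have hm0 : Stmt11.W c m = [] → m = 0 := by
        intro h0
        have := Stmt11.W_length c m
        rw [h0] at this
        simpa using this.symm
      rcases lt_trichotomy w 0 with hlt | heq0 | hgt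
      · exfalso
        have h1 : w * q (m + 1) ≤ -q (m + 1) := by nlinarith
        have h2 : p (m + 1) - q m = -q (m + 1) := by omega
        have h3 : p (m + 1) = 0 := by omega
        have h4 : Stmt11.W c m = [] := by
          by_contra hne'
          have := (hne hne').1
          omega
        have hm := hm0 h4
        subst hm
        simp only [hp1, hq0] at h3 h2 ⊢
        omega
      · rw [heq0] at hw
        omega
      · exfalso
        have h1 : q (m + 1) ≤ w * q (m + 1) := by nlinarith
        have h2 : p (m + 1) - q m = q (m + 1) := by omega
        have h3 : q m = 0 := by omega
        have h4 : Stmt11.W c m = [] := by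
          by_contra hne'
          have := (hne hne').2.1
          omega
        have hm := hm0 h4
        subst hm
        simp only [hp1, hq0, hq1] at h2 h3
        omega
    · intro hpq
      refine ⟨-(c (m + 1)), ?_⟩
      have hQne : (q (m + 1) : ℚ) ≠ 0 := by
        have : (0 : ℚ) < (q (m + 1) : ℚ) := by exact_mod_cast hQ1
        exact ne_of_gt this
      have h1 : (2 * a) * (q (m + 1) : ℚ) = (-(c (m + 1)) : ℤ) * (q (m + 1) : ℚ) := by
        have hq2' : (q (m + 2) : ℚ) = (c (m + 1) : ℚ) * (q (m + 1) : ℚ) + (q m : ℚ) := by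
          exact_mod_cast congrArg (Int.cast : ℤ → ℚ) (hq m)
        have hpq' : (p (m + 1) : ℚ) = (q m : ℚ) := by exact_mod_cast hpq
        push_cast
        push_cast at hq2' hpq'
        nlinarith [hB, hq2', hpq']
      exact mul_right_cancel₀ hQne h1
  have key2 : p (m + 1) = q m → 2 * a = -(c (m + 1) : ℚ) := by
    intro hpq
    have hQne : (q (m + 1) : ℚ) ≠ 0 := by
      have : (0 : ℚ) < (q (m + 1) : ℚ) := by exact_mod_cast hQ1
      exact ne_of_gt this
    have hq2' : (q (m + 2) : ℚ) = (c (m + 1) : ℚ) * (q (m + 1) : ℚ) + (q m : ℚ) := by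
      exact_mod_cast congrArg (Int.cast : ℤ → ℚ) (hq m)
    have hpq' : (p (m + 1) : ℚ) = (q m : ℚ) := by exact_mod_cast hpq
    have h1 : (2 * a) * (q (m + 1) : ℚ) = (-(c (m + 1) : ℚ)) * (q (m + 1) : ℚ) := by
      nlinarith [hB, hq2', hpq']
    exact mul_right_cancel₀ hQne h1
  have key3 : p (m + 1) = q m ↔ (Stmt11.W c m).reverse = Stmt11.W c m := by
    constructor
    · intro hpq
      have hrev : Stmt11.mf ((Stmt11.W c m).reverse) = Stmt11.mf (Stmt11.W c m) := by
        rw [Stmt11.mf_reverse, hW m]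
        simp only
        rw [hpq]
      exact Stmt11.mf_inj _ _ (fun y hy => hmem m y (List.mem_reverse.mp hy)) (hmem m)
        (by simp) hrev
    · intro hrev
      have := congrArg Stmt11.mf hrev
      rw [Stmt11.mf_reverse, hW m] at this
      have h2 := congrArg (fun t => t.2.1) this
      simpa using h2
  have key4 : ((Stmt11.W c m).reverse = Stmt11.W c m) ↔
      ∀ k, 1 ≤ k → k ≤ m + 1 - 1 → c k = c (m + 1 - k) :=
    Stmt11.W_palindrome_iff c m
  constructor
  · constructor
    · intro hex
      exact key2 (key1.mp hex)
    · intro hb2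
      exact ⟨-(c (m + 1)), by rw [hb2]; push_cast; ring⟩
  · exact key1.trans (key3.trans key4)
end
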